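/- Let π be a Borel probability measure on ℝⁿ satisfying the Poincaré inequality Var_π[f] ≤ 4 ∫|∇f|² dπ for all locally Lipschitz f with finite right-hand side. Then there is a universal constant c > 0 such that for every 1-Lipschitz function f: ℝⁿ → ℝ, ∫ f dπ =: A is finite and ∫ exp(c|f − A|) dπ ≤ 2. -/

import Mathlib

open Metric

/-- The (upper) local Lipschitz slope
`|∇F|(x) = lim_{ε→0⁺} sup { |F(y)-F(z)| / dist(y,z) : y,z ∈ B(x,ε), y ≠ z }`,
valued in `ℝ≥0∞`. -/
noncomputable def gradNorm {X : Type*} [MetricSpace X] (F : X → ℝ) (x : X) : ENNReal :=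
  ⨅ (ε : ℝ) (_ : 0 < ε),
    ⨆ (y : X) (_ : y ∈ ball x ε) (z : X) (_ : z ∈ ball x ε) (_ : y ≠ z),
      ENNReal.ofReal (|F y - F z| / dist y z)

open MeasureTheory

section GMaux

variable {X : Type*} [MetricSpace X]

lemma gradNorm_le_of_lipschitz {K : NNReal} {F : X → ℝ} (hF : LipschitzWith K F) (x : X) :
    gradNorm F x ≤ (K : ENNReal) := by
  refine le_trans (iInf₂_le (1 : ℝ) one_pos) ?_
  refine iSup₂_le fun y _ => iSup₂_le fun z _ => iSup_le fun hyz => ?_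
  have hd : (0:ℝ) < dist y z := dist_pos.2 hyz
  have h1 : |F y - F z| ≤ (K : ℝ) * dist y z := by
    have := hF.dist_le_mul y z
    rwa [Real.dist_eq] at this
  have h2 : |F y - F z| / dist y z ≤ (K : ℝ) := by
    rw [div_le_iff₀ hd]; exact h1
  calc ENNReal.ofReal (|F y - F z| / dist y z) ≤ ENNReal.ofReal (K : ℝ) :=
        ENNReal.ofReal_le_ofReal h2
    _ = (K : ENNReal) := ENNReal.ofReal_coe_nnreal

lemma gradNorm_eq_zero_of_const {F : X → ℝ} {x : X} {ε : ℝ} (hε : 0 < ε)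
    (h : ∀ y ∈ ball x ε, F y = F x) : gradNorm F x = 0 := by
  refine le_antisymm (le_trans (iInf₂_le ε hε) ?_) zero_le
  refine iSup₂_le fun y hy => iSup₂_le fun z hz => iSup_le fun hyz => ?_
  rw [h y hy, h z hz, sub_self, abs_zero, zero_div, ENNReal.ofReal_zero]

end GMaux

section GMmain

variable {X : Type*} [MetricSpace X] [MeasurableSpace X] [BorelSpace X]
variable (π : Measure X) [IsProbabilityMeasure π]

/-- The Poincaré hypothesis, abstracted. -/
def PoincareHyp : Prop :=
  ∀ g : X → ℝ, LocallyLipschitz g →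
    Integrable g π → Integrable (fun x => (g x) ^ 2) π →
    (∫⁻ x, (gradNorm g x) ^ 2 ∂π) ≠ ⊤ →
    (∫ x, (g x) ^ 2 ∂π) - (∫ x, g x ∂π) ^ 2 ≤
      4 * (∫⁻ x, (gradNorm g x) ^ 2 ∂π).toReal

variable {f : X → ℝ}

lemma median_exists (hf : Continuous f) :
    ∃ m : ℝ, π {x | m < f x} ≤ 1/2 ∧ π {x | f x < m} ≤ 1/2 := by
  have hmf : Measurable f := hf.measurable
  have mble : ∀ t : ℝ, MeasurableSet {x | f x ≤ t} := fun t =>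
    measurableSet_le hmf measurable_const
  set S : Set ℝ := {t | 1/2 ≤ π {x | f x ≤ t}} with hS
  have hSup : ∀ {s t : ℝ}, s ≤ t → s ∈ S → t ∈ S := by
    intro s t hst hs
    exact le_trans hs (measure_mono fun x hx => le_trans hx hst)
  have hS_ne : S.Nonempty := by
    by_contra h
    rw [Set.not_nonempty_iff_eq_empty] at h
    have hall : ∀ t : ℝ, π {x | f x ≤ t} < 1/2 := by
      intro t
      by_contra ht
      push_neg at ht
      have : t ∈ S := ht
      simp [h] at this
    have hmono : Monotone (fun n : ℕ => {x | f x ≤ (n:ℝ)}) := by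
      intro a b hab x hx
      simp only [Set.mem_setOf_eq] at *
      have : (a:ℝ) ≤ (b:ℝ) := Nat.cast_le.2 hab
      linarith
    have hU : (⋃ n : ℕ, {x | f x ≤ (n:ℝ)}) = Set.univ := by
      ext x
      simp only [Set.mem_iUnion, Set.mem_setOf_eq, Set.mem_univ, iff_true]
      exact exists_nat_ge (f x)
    have hiu := hmono.measure_iUnion (μ := π)
    rw [hU, measure_univ] at hiu
    have h1 : (1 : ENNReal) ≤ 1/2 := by
      calc (1 : ENNReal) = ⨆ n : ℕ, π {x | f x ≤ (n:ℝ)} := hiu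
        _ ≤ 1/2 := iSup_le fun n => (hall n).le
    norm_num at h1
  have hS_bdd : BddBelow S := by
    obtain ⟨n₀, hn₀⟩ : ∃ n : ℕ, π {x | f x ≤ -(n:ℝ)} < 1/2 := by
      by_contra h
      push_neg at h
      have hanti : Antitone (fun n : ℕ => {x | f x ≤ -(n:ℝ)}) := by
        intro a b hab x hx
        simp only [Set.mem_setOf_eq] at *
        have : (a:ℝ) ≤ (b:ℝ) := Nat.cast_le.2 hab
        linarith
      have hI : (⋂ n : ℕ, {x | f x ≤ -(n:ℝ)}) = ∅ := by
        ext x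
        simp only [Set.mem_iInter, Set.mem_setOf_eq, Set.mem_empty_iff_false, iff_false]
        push_neg
        obtain ⟨n, hn⟩ := exists_nat_gt (-f x)
        exact ⟨n, by linarith⟩
      have hii := hanti.measure_iInter (fun n => (mble _).nullMeasurableSet)
        ⟨0, measure_ne_top π _⟩
      rw [hI, measure_empty] at hii
      have h1 : (1/2 : ENNReal) ≤ 0 := by
        calc (1/2 : ENNReal) ≤ ⨅ n : ℕ, π {x | f x ≤ -(n:ℝ)} := le_iInf fun n => h n
          _ = 0 := hii.symm
      norm_num at h1
    refine ⟨-(n₀:ℝ), fun t ht => ?_⟩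
    by_contra hlt
    push_neg at hlt
    have : π {x | f x ≤ t} < 1/2 :=
      lt_of_le_of_lt (measure_mono fun x hx => le_trans hx hlt.le) hn₀
    exact absurd ht (not_le.2 this)
  set m := sInf S with hm
  have half_sub : (1 : ENNReal) - 1/2 = 1/2 := by
    have := ENNReal.sub_half (a := 1) ENNReal.one_ne_top
    simpa using this
  refine ⟨m, ?_, ?_⟩
  · have key : ∀ ε : ℝ, 0 < ε → π {x | m + ε < f x} ≤ 1/2 := by
      intro ε hε
      obtain ⟨t, htS, htlt⟩ := (csInf_lt_iff hS_bdd hS_ne).1 (lt_add_of_pos_right m hε)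
      have hsum : π {x | f x ≤ t} + π {x | f x ≤ t}ᶜ = 1 := by
        rw [measure_add_measure_compl (mble t), measure_univ]
      have hcompl : π {x | f x ≤ t}ᶜ ≤ 1/2 := by
        have h1 : π {x | f x ≤ t}ᶜ = 1 - π {x | f x ≤ t} := by
          rw [← hsum]
          rw [ENNReal.add_sub_cancel_left (measure_ne_top π _)]
        rw [h1]
        calc (1:ENNReal) - π {x | f x ≤ t} ≤ 1 - 1/2 :=
            tsub_le_tsub_left htS 1
          _ = 1/2 := half_sub
      refine le_trans (measure_mono ?_) hcompl
      intro x hx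
      simp only [Set.mem_compl_iff, Set.mem_setOf_eq, not_le]
      exact lt_trans htlt hx
    have hUeq : {x | m < f x} = ⋃ n : ℕ, {x | m + 1/((n:ℝ)+1) < f x} := by
      ext x
      simp only [Set.mem_setOf_eq, Set.mem_iUnion]
      constructor
      · intro hx
        obtain ⟨n, hn⟩ := exists_nat_one_div_lt (sub_pos.2 hx)
        exact ⟨n, by linarith⟩
      · rintro ⟨n, hn⟩
        have hp : (0:ℝ) < 1/((n:ℝ)+1) := by positivity
        linarith
    have hmono2 : Monotone fun n : ℕ => {x | m + 1/((n:ℝ)+1) < f x} := by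
      intro a b hab x hx
      simp only [Set.mem_setOf_eq] at *
      have hc : ((a:ℝ)+1) ≤ ((b:ℝ)+1) := by
        have : (a:ℝ) ≤ (b:ℝ) := Nat.cast_le.2 hab
        linarith
      have : 1/((b:ℝ)+1) ≤ 1/((a:ℝ)+1) := one_div_le_one_div_of_le (by positivity) hc
      linarith
    rw [hUeq, hmono2.measure_iUnion]
    exact iSup_le fun n => key _ (by positivity)
  · have key2 : ∀ t : ℝ, t < m → π {x | f x ≤ t} ≤ 1/2 := by
      intro t ht
      have hnotS : t ∉ S := fun hmem => absurd (csInf_le hS_bdd hmem) (not_le.2 ht)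
      simp only [hS, Set.mem_setOf_eq] at hnotS
      exact (not_le.1 hnotS).le
    have hUeq2 : {x | f x < m} = ⋃ n : ℕ, {x | f x ≤ m - 1/((n:ℝ)+1)} := by
      ext x
      simp only [Set.mem_setOf_eq, Set.mem_iUnion]
      constructor
      · intro hx
        obtain ⟨n, hn⟩ := exists_nat_one_div_lt (sub_pos.2 hx)
        exact ⟨n, by linarith⟩
      · rintro ⟨n, hn⟩
        have hp : (0:ℝ) < 1/((n:ℝ)+1) := by positivity
        linarith
    have hmono3 : Monotone fun n : ℕ => {x | f x ≤ m - 1/((n:ℝ)+1)} := by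
      intro a b hab x hx
      simp only [Set.mem_setOf_eq] at *
      have hc : ((a:ℝ)+1) ≤ ((b:ℝ)+1) := by
        have : (a:ℝ) ≤ (b:ℝ) := Nat.cast_le.2 hab
        linarith
      have : 1/((b:ℝ)+1) ≤ 1/((a:ℝ)+1) := one_div_le_one_div_of_le (by positivity) hc
      linarith
    rw [hUeq2, hmono3.measure_iUnion]
    refine iSup_le fun n => key2 _ ?_
    have hp : (0:ℝ) < 1/((n:ℝ)+1) := by positivity
    linarith


lemma gm_step (hP : PoincareHyp π) (hf : LipschitzWith 1 f) (a : ℝ)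
    (ha : π {x | a < f x} ≤ 1/2) :
    (π {x | a + 4 ≤ f x}).toReal ≤ 3/4 * (π {x | a ≤ f x}).toReal := by
  have hfc : Continuous f := hf.continuous
  set g : X → ℝ := fun x => min (max (f x - a) 0) 4 with hgdef
  have hclamp : LipschitzWith 1 (fun t : ℝ => min (max (t - a) 0) 4) := by
    have h1 : LipschitzWith 1 (fun t : ℝ => t - a) :=
      LipschitzWith.of_dist_le_mul fun s t => by
        simp [Real.dist_eq, one_mul]
    exact (h1.max_const 0).min_const 4
  have hg_lip : LipschitzWith 1 g := by
    have := hclamp.comp hf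
    rwa [one_mul] at this
  have hg0 : ∀ x, 0 ≤ g x := fun x => le_min (le_max_right _ _) (by norm_num)
  have hg4 : ∀ x, g x ≤ 4 := fun x => min_le_right _ _
  have hgc : Continuous g := hg_lip.continuous
  have mble_le : ∀ b : ℝ, MeasurableSet {x | b ≤ f x} := fun b =>
    measurableSet_le measurable_const hfc.measurable
  have mble_lt : MeasurableSet {x | a < f x} :=
    measurableSet_lt measurable_const hfc.measurable
  -- values of g
  have hgzero : ∀ x, f x ≤ a → g x = 0 := by
    intro x hx
    have h1 : max (f x - a) 0 = 0 := max_eq_right (by linarith)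
    simp only [hgdef, h1]
    exact min_eq_left (by norm_num)
  have hgfour : ∀ x, a + 4 ≤ f x → g x = 4 := by
    intro x hx
    have h1 : max (f x - a) 0 = f x - a := max_eq_left (by linarith)
    simp only [hgdef, h1]
    exact min_eq_right (by linarith)
  -- integrability
  have hg_int : Integrable g π := by
    refine (integrable_const (4:ℝ)).mono' hgc.aestronglyMeasurable
      (Filter.Eventually.of_forall fun x => ?_)
    rw [Real.norm_eq_abs, abs_of_nonneg (hg0 x)]
    exact hg4 x
  have hg2_int : Integrable (fun x => (g x) ^ 2) π := by
    refine (integrable_const (16:ℝ)).mono' ((hgc.pow 2).aestronglyMeasurable)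
      (Filter.Eventually.of_forall fun x => ?_)
    rw [Real.norm_eq_abs, abs_of_nonneg (by positivity)]
    nlinarith [hg0 x, hg4 x]
  -- gradient bound
  have hgrad : ∀ x, (gradNorm g x) ^ 2 ≤ {x | a ≤ f x}.indicator (fun _ => (1:ENNReal)) x := by
    intro x
    by_cases hx : a ≤ f x
    · rw [Set.indicator_of_mem (show x ∈ {x | a ≤ f x} from hx)]
      have h1 : gradNorm g x ≤ 1 := by
        have := gradNorm_le_of_lipschitz hg_lip x
        simpa using this
      calc (gradNorm g x) ^ 2 ≤ 1 ^ 2 := pow_le_pow_left₀ zero_le h1 2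
        _ = 1 := one_pow 2
    · rw [Set.indicator_of_notMem (show x ∉ {x | a ≤ f x} from hx)]
      push_neg at hx
      have hz : gradNorm g x = 0 := by
        refine gradNorm_eq_zero_of_const (ε := a - f x) (by linarith) fun y hy => ?_
        have hyx : dist y x < a - f x := mem_ball.1 hy
        have hfy : f y < a := by
          have := hf.dist_le_mul y x
          rw [Real.dist_eq] at this
          have h2 : |f y - f x| ≤ dist y x := by simpa using this
          have := abs_le.1 h2
          linarith [this.2]
        rw [hgzero y hfy.le, hgzero x hx.le]
      rw [hz]
      simp
  have hgradle : (∫⁻ x, (gradNorm g x) ^ 2 ∂π) ≤ π {x | a ≤ f x} := by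
    calc (∫⁻ x, (gradNorm g x) ^ 2 ∂π)
        ≤ ∫⁻ x, {x | a ≤ f x}.indicator (fun _ => (1:ENNReal)) x ∂π := lintegral_mono hgrad
      _ = π {x | a ≤ f x} := by
          have := lintegral_indicator_one (μ := π) (mble_le a)
          exact this
  have hne : (∫⁻ x, (gradNorm g x) ^ 2 ∂π) ≠ ⊤ :=
    ne_top_of_le_ne_top (measure_ne_top π _) hgradle
  have hpoin := hP g hg_lip.locallyLipschitz hg_int hg2_int hne
  -- lower bound on ∫ g²
  have h1 : 16 * (π {x | a + 4 ≤ f x}).toReal ≤ ∫ x, (g x) ^ 2 ∂π := by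
    have hptw : ∀ x, {x | a + 4 ≤ f x}.indicator (fun _ => (16:ℝ)) x ≤ (g x) ^ 2 := by
      intro x
      by_cases hx : a + 4 ≤ f x
      · rw [Set.indicator_of_mem (show x ∈ {x | a + 4 ≤ f x} from hx), hgfour x hx]; norm_num
      · rw [Set.indicator_of_notMem (show x ∉ {x | a + 4 ≤ f x} from hx)]; positivity
    have hii : Integrable ({x | a + 4 ≤ f x}.indicator (fun _ => (16:ℝ))) π :=
      (integrable_indicator_iff (mble_le (a+4))).2 (integrableOn_const (measure_ne_top π _) (by simp))
    calc 16 * (π {x | a + 4 ≤ f x}).toReal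
        = (π {x | a + 4 ≤ f x}).toReal • (16:ℝ) := by rw [smul_eq_mul]; ring
      _ = ∫ x, {x | a + 4 ≤ f x}.indicator (fun _ => (16:ℝ)) x ∂π :=
          (integral_indicator_const (16:ℝ) (mble_le (a+4))).symm
      _ ≤ ∫ x, (g x) ^ 2 ∂π := integral_mono hii hg2_int hptw
  -- upper bound on ∫ g
  have h2 : ∫ x, g x ∂π ≤ 4 * (π {x | a < f x}).toReal := by
    have hptw : ∀ x, g x ≤ {x | a < f x}.indicator (fun _ => (4:ℝ)) x := by
      intro x
      by_cases hx : a < f x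
      · rw [Set.indicator_of_mem (show x ∈ {x | a < f x} from hx)]; exact hg4 x
      · rw [Set.indicator_of_notMem (show x ∉ {x | a < f x} from hx)]
        push_neg at hx
        rw [hgzero x hx]
    have hii : Integrable ({x | a < f x}.indicator (fun _ => (4:ℝ))) π :=
      (integrable_indicator_iff mble_lt).2 (integrableOn_const (measure_ne_top π _) (by simp))
    calc ∫ x, g x ∂π ≤ ∫ x, {x | a < f x}.indicator (fun _ => (4:ℝ)) x ∂π :=
          integral_mono hg_int hii hptw
      _ = (π {x | a < f x}).toReal • (4:ℝ) := integral_indicator_const (4:ℝ) mble_lt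
      _ = 4 * (π {x | a < f x}).toReal := by rw [smul_eq_mul]; ring
  have h2' : 0 ≤ ∫ x, g x ∂π := integral_nonneg hg0
  have h3 : (π {x | a < f x}).toReal ≤ 1/2 := by
    have := ENNReal.toReal_mono (by norm_num) ha
    simpa using this
  have h4 : (π {x | a < f x}).toReal ≤ (π {x | a ≤ f x}).toReal :=
    ENNReal.toReal_mono (measure_ne_top π _) (measure_mono fun x hx => show a ≤ f x from le_of_lt hx)
  have h5 : (∫⁻ x, (gradNorm g x) ^ 2 ∂π).toReal ≤ (π {x | a ≤ f x}).toReal :=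
    ENNReal.toReal_mono (measure_ne_top π _) hgradle
  have h6 : 0 ≤ (π {x | a < f x}).toReal := ENNReal.toReal_nonneg
  nlinarith [hpoin, h1, h2, h2', h3, h4, h5, h6, sq_nonneg (∫ x, g x ∂π)]


lemma gm_tail (hP : PoincareHyp π) (hf : LipschitzWith 1 f) (m : ℝ)
    (hm : π {x | m < f x} ≤ 1/2) :
    ∀ k : ℕ, (π {x | m + 4*(k:ℝ) ≤ f x}).toReal ≤ (3/4:ℝ)^k := by
  intro k
  induction k with
  | zero =>
    simp only [Nat.cast_zero, mul_zero, add_zero, pow_zero]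
    have h1 := prob_le_one (μ := π) (s := {x | m ≤ f x})
    have h2 := ENNReal.toReal_mono ENNReal.one_ne_top h1
    simpa using h2
  | succ k ih =>
    have hs : π {x | (m + 4*(k:ℝ)) < f x} ≤ 1/2 := by
      refine le_trans (measure_mono ?_) hm
      intro x hx
      simp only [Set.mem_setOf_eq] at *
      have : (0:ℝ) ≤ (k:ℝ) := Nat.cast_nonneg k
      linarith
    have hstep := gm_step π hP hf (m + 4*(k:ℝ)) hs
    have hset : {x | m + 4*(((k+1):ℕ):ℝ) ≤ f x} = {x | (m + 4*(k:ℝ)) + 4 ≤ f x} := by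
      ext x
      simp only [Set.mem_setOf_eq]
      push_cast
      constructor <;> intro <;> linarith
    rw [hset]
    calc (π {x | (m + 4*(k:ℝ)) + 4 ≤ f x}).toReal
        ≤ 3/4 * (π {x | m + 4*(k:ℝ) ≤ f x}).toReal := hstep
      _ ≤ 3/4 * (3/4:ℝ)^k := by linarith [ih]
      _ = (3/4:ℝ)^(k+1) := by rw [pow_succ]; ring

lemma exp_le_inv_one_sub {x : ℝ} (h0 : 0 ≤ x) (h1 : x < 1) : Real.exp x ≤ (1-x)⁻¹ := by
  have h2 : 1 - x ≤ Real.exp (-x) := by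
    have := Real.add_one_le_exp (-x)
    linarith
  have hpos : (0:ℝ) < Real.exp x := Real.exp_pos x
  rw [Real.exp_neg] at h2
  have h4 : (1-x) * Real.exp x ≤ 1 := by
    calc (1-x) * Real.exp x ≤ (Real.exp x)⁻¹ * Real.exp x :=
        mul_le_mul_of_nonneg_right h2 hpos.le
      _ = 1 := inv_mul_cancel₀ (ne_of_gt hpos)
  rw [inv_eq_one_div, le_div_iff₀ (by linarith)]
  linarith

end GMmain

theorem stmt19 :
    ∃ c : ℝ, 0 < c ∧
      ∀ (n : ℕ) (π : Measure (EuclideanSpace ℝ (Fin n))), IsProbabilityMeasure π →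
        (∀ f : EuclideanSpace ℝ (Fin n) → ℝ, LocallyLipschitz f →
          Integrable f π → Integrable (fun x => (f x) ^ 2) π →
          (∫⁻ x, (gradNorm f x) ^ 2 ∂π) ≠ ⊤ →
          (∫ x, (f x) ^ 2 ∂π) - (∫ x, f x ∂π) ^ 2 ≤
            4 * (∫⁻ x, (gradNorm f x) ^ 2 ∂π).toReal) →
        ∀ f : EuclideanSpace ℝ (Fin n) → ℝ, LipschitzWith 1 f →
          Integrable f π ∧ ∫ x, Real.exp (c * |f x - ∫ y, f y ∂π|) ∂π ≤ 2 := by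
  refine ⟨1/1000, by norm_num, ?_⟩
  intro n π hπ hP f hf
  set c : ℝ := 1/1000 with hc
  have hc0 : (0:ℝ) ≤ c := by norm_num
  have hfc : Continuous f := hf.continuous
  have hPP : PoincareHyp π := hP
  obtain ⟨m, hm1, hm2⟩ := median_exists π hfc
  have tail_up := gm_tail π hPP hf m hm1
  have hfneg : LipschitzWith 1 (fun x => -(f x)) := hf.neg
  have hm1' : π {x | -m < -(f x)} ≤ 1/2 := by
    have hset : {x | -m < -(f x)} = {x | f x < m} := by
      ext x; simp only [Set.mem_setOf_eq]; constructor <;> intro <;> linarith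
    rw [hset]; exact hm2
  have tail_dn := gm_tail π hPP hfneg (-m) hm1'
  set A : ℕ → Set (EuclideanSpace ℝ (Fin n)) := fun k => {x | 4*(k:ℝ) ≤ |f x - m|} with hA
  have hAmeas : ∀ k, MeasurableSet (A k) := fun k =>
    measurableSet_le measurable_const ((hfc.sub continuous_const).abs.measurable)
  have tailA : ∀ k, π (A k) ≤ ENNReal.ofReal (2 * (3/4:ℝ)^k) := by
    intro k
    have hsub : A k ⊆ {x | m + 4*(k:ℝ) ≤ f x} ∪ {x | -m + 4*(k:ℝ) ≤ -(f x)} := by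
      intro x hx
      simp only [hA, Set.mem_setOf_eq] at hx
      rcases le_abs.1 hx with h | h
      · left; show m + 4*(k:ℝ) ≤ f x; linarith
      · right; show -m + 4*(k:ℝ) ≤ -(f x); linarith
    have hp : (0:ℝ) ≤ (3/4:ℝ)^k := by positivity
    have hup : π {x | m + 4*(k:ℝ) ≤ f x} ≤ ENNReal.ofReal ((3/4:ℝ)^k) :=
      (ENNReal.le_ofReal_iff_toReal_le (measure_ne_top π _) hp).2 (tail_up k)
    have hdn : π {x | -m + 4*(k:ℝ) ≤ -(f x)} ≤ ENNReal.ofReal ((3/4:ℝ)^k) :=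
      (ENNReal.le_ofReal_iff_toReal_le (measure_ne_top π _) hp).2 (tail_dn k)
    calc π (A k) ≤ π ({x | m + 4*(k:ℝ) ≤ f x} ∪ {x | -m + 4*(k:ℝ) ≤ -(f x)}) :=
          measure_mono hsub
      _ ≤ π {x | m + 4*(k:ℝ) ≤ f x} + π {x | -m + 4*(k:ℝ) ≤ -(f x)} := measure_union_le _ _
      _ ≤ ENNReal.ofReal ((3/4:ℝ)^k) + ENNReal.ofReal ((3/4:ℝ)^k) := add_le_add hup hdn
      _ = ENNReal.ofReal (2 * (3/4:ℝ)^k) := by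
          rw [← ENNReal.ofReal_add hp hp]; congr 1; ring
  -- layer cake for |f - m|
  have layer_abs : ∀ x, ENNReal.ofReal |f x - m| ≤
      ∑' k : ℕ, (A k).indicator (fun _ => (4:ENNReal)) x := by
    intro x
    set gv := |f x - m| with hgv
    have hgv0 : (0:ℝ) ≤ gv := abs_nonneg _
    set K := ⌊gv/4⌋₊ with hK
    have hup : gv ≤ 4*((K:ℝ)+1) := by
      have h1 := Nat.lt_floor_add_one (gv/4)
      rw [← hK] at h1
      linarith
    have hmem : ∀ k : ℕ, k ≤ K → x ∈ A k := by
      intro k hk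
      have h1 : (k:ℝ) ≤ gv/4 :=
        le_trans (Nat.cast_le.2 hk) (Nat.floor_le (by positivity))
      simp only [hA, Set.mem_setOf_eq]
      rw [← hgv]
      linarith
    calc ENNReal.ofReal gv ≤ ENNReal.ofReal (∑ _k ∈ Finset.range (K+1), (4:ℝ)) := by
          apply ENNReal.ofReal_le_ofReal
          rw [Finset.sum_const, Finset.card_range, nsmul_eq_mul]
          push_cast
          linarith
      _ = ∑ _k ∈ Finset.range (K+1), ENNReal.ofReal (4:ℝ) :=
          ENNReal.ofReal_sum_of_nonneg fun _ _ => by norm_num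
      _ = ∑ k ∈ Finset.range (K+1), (A k).indicator (fun _ => (4:ENNReal)) x := by
          refine Finset.sum_congr rfl fun k hk => ?_
          rw [Set.indicator_of_mem (hmem k (Nat.lt_succ_iff.1 (Finset.mem_range.1 hk)))]
          simp
      _ ≤ ∑' k : ℕ, (A k).indicator (fun _ => (4:ENNReal)) x := ENNReal.sum_le_tsum _
  have habs : (∫⁻ x, ENNReal.ofReal |f x - m| ∂π) ≤ ENNReal.ofReal 32 := by
    calc (∫⁻ x, ENNReal.ofReal |f x - m| ∂π)
        ≤ ∫⁻ x, ∑' k : ℕ, (A k).indicator (fun _ => (4:ENNReal)) x ∂π :=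
          lintegral_mono layer_abs
      _ = ∑' k : ℕ, ∫⁻ x, (A k).indicator (fun _ => (4:ENNReal)) x ∂π :=
          lintegral_tsum fun k => (measurable_const.indicator (hAmeas k)).aemeasurable
      _ = ∑' k : ℕ, 4 * π (A k) := by
          refine tsum_congr fun k => ?_
          rw [lintegral_indicator (hAmeas k), setLIntegral_const]
      _ ≤ ∑' k : ℕ, ENNReal.ofReal (8 * (3/4:ℝ)^k) := by
          refine ENNReal.tsum_le_tsum fun k => ?_
          calc 4 * π (A k) ≤ 4 * ENNReal.ofReal (2 * (3/4:ℝ)^k) :=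
                mul_le_mul_right (tailA k) 4
            _ = ENNReal.ofReal (8 * (3/4:ℝ)^k) := by
                rw [show (4:ENNReal) = ENNReal.ofReal (4:ℝ) by norm_num,
                  ← ENNReal.ofReal_mul (by norm_num)]
                congr 1; ring
      _ = ENNReal.ofReal (∑' k : ℕ, 8 * (3/4:ℝ)^k) :=
          (ENNReal.ofReal_tsum_of_nonneg (fun k => by positivity)
            ((summable_geometric_of_lt_one (by norm_num) (by norm_num)).mul_left 8)).symm
      _ = ENNReal.ofReal 32 := by
          rw [tsum_mul_left, tsum_geometric_of_lt_one (by norm_num) (by norm_num)]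
          norm_num
  -- integrability of f
  have hmeasfm : AEStronglyMeasurable (fun x => f x - m) π :=
    (hfc.sub continuous_const).aestronglyMeasurable
  have hint_fm : Integrable (fun x => f x - m) π := by
    refine ⟨hmeasfm, ?_⟩
    rw [hasFiniteIntegral_iff_norm]
    calc (∫⁻ x, ENNReal.ofReal ‖f x - m‖ ∂π) = ∫⁻ x, ENNReal.ofReal |f x - m| ∂π := by
          simp only [Real.norm_eq_abs]
      _ ≤ ENNReal.ofReal 32 := habs
      _ < ⊤ := ENNReal.ofReal_lt_top
  have hint_f : Integrable f π := by
    have h := hint_fm.add (integrable_const m)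
    have heq : ((fun x => f x - m) + fun _ => m) = f := by funext x; simp
    rwa [heq] at h
  refine ⟨hint_f, ?_⟩
  set Av : ℝ := ∫ y, f y ∂π with hAv
  have hAm : |Av - m| ≤ 32 := by
    have h1 : ∫ x, (f x - m) ∂π = Av - m := by
      rw [integral_sub hint_f (integrable_const m), integral_const]
      simp [hAv]
    have h2 : |∫ x, (f x - m) ∂π| ≤ ∫ x, |f x - m| ∂π := by
      have := norm_integral_le_integral_norm (μ := π) (fun x => f x - m)
      simpa [Real.norm_eq_abs] using this
    have h3 : ∫ x, |f x - m| ∂π ≤ 32 := by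
      rw [integral_eq_lintegral_of_nonneg_ae (f := fun x => |f x - m|)
        (Filter.Eventually.of_forall fun x => abs_nonneg _)
        (hfc.sub continuous_const).abs.aestronglyMeasurable]
      have h4 := ENNReal.toReal_mono ENNReal.ofReal_ne_top habs
      calc (∫⁻ x, ENNReal.ofReal |f x - m| ∂π).toReal ≤ (ENNReal.ofReal (32:ℝ)).toReal := h4
        _ = 32 := by rw [ENNReal.toReal_ofReal]; norm_num
    rw [h1] at h2
    linarith
  -- exponential layer cake
  set D : ℕ → ENNReal :=
    fun k => ENNReal.ofReal (Real.exp (c*(4*((k:ℝ)+1))) - Real.exp (c*(4*(k:ℝ)))) with hD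
  have hDre : ∀ k : ℕ, (0:ℝ) ≤ Real.exp (c*(4*((k:ℝ)+1))) - Real.exp (c*(4*(k:ℝ))) := by
    intro k
    have hk0 : (0:ℝ) ≤ (k:ℝ) := Nat.cast_nonneg k
    have : c*(4*(k:ℝ)) ≤ c*(4*((k:ℝ)+1)) := by rw [hc]; nlinarith
    linarith [Real.exp_le_exp.2 this]
  have layer_exp : ∀ x, ENNReal.ofReal (Real.exp (c * |f x - m|)) ≤
      1 + ∑' k : ℕ, (A k).indicator (fun _ => D k) x := by
    intro x
    set gv := |f x - m| with hgv
    have hgv0 : (0:ℝ) ≤ gv := abs_nonneg _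
    set K := ⌊gv/4⌋₊ with hK
    have hup : gv ≤ 4*((K:ℝ)+1) := by
      have h1 := Nat.lt_floor_add_one (gv/4)
      rw [← hK] at h1
      linarith
    have hmem : ∀ k : ℕ, k ≤ K → x ∈ A k := by
      intro k hk
      have h1 : (k:ℝ) ≤ gv/4 :=
        le_trans (Nat.cast_le.2 hk) (Nat.floor_le (by positivity))
      simp only [hA, Set.mem_setOf_eq]
      rw [← hgv]
      linarith
    have tele : ∑ k ∈ Finset.range (K+1),
        (Real.exp (c*(4*((k:ℝ)+1))) - Real.exp (c*(4*(k:ℝ))))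
        = Real.exp (c*(4*((K:ℝ)+1))) - 1 := by
      have h := Finset.sum_range_sub (fun k : ℕ => Real.exp (c*(4*(k:ℝ)))) (K+1)
      push_cast at h
      simpa using h
    calc ENNReal.ofReal (Real.exp (c * gv))
        ≤ ENNReal.ofReal (Real.exp (c*(4*((K:ℝ)+1)))) := by
          apply ENNReal.ofReal_le_ofReal
          exact Real.exp_le_exp.2 (mul_le_mul_of_nonneg_left hup hc0)
      _ = ENNReal.ofReal (1 + ∑ k ∈ Finset.range (K+1),
            (Real.exp (c*(4*((k:ℝ)+1))) - Real.exp (c*(4*(k:ℝ))))) := by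
          rw [tele]; congr 1; ring
      _ = 1 + ∑ k ∈ Finset.range (K+1), D k := by
          rw [ENNReal.ofReal_add (by norm_num)
            (Finset.sum_nonneg fun k _ => hDre k), ENNReal.ofReal_one,
            ENNReal.ofReal_sum_of_nonneg fun k _ => hDre k]
      _ = 1 + ∑ k ∈ Finset.range (K+1), (A k).indicator (fun _ => D k) x := by
          congr 1
          refine Finset.sum_congr rfl fun k hk => ?_
          rw [Set.indicator_of_mem (hmem k (Nat.lt_succ_iff.1 (Finset.mem_range.1 hk)))]
      _ ≤ 1 + ∑' k : ℕ, (A k).indicator (fun _ => D k) x :=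
          add_le_add_right (ENNReal.sum_le_tsum _) 1
  have hsum_bound : (∑' k : ℕ, D k * π (A k)) ≤ ENNReal.ofReal (332/10209 : ℝ) := by
    have hexpc : Real.exp (4*c) ≤ 250/249 := by
      have := exp_le_inv_one_sub (x := 4*c) (by norm_num) (by norm_num)
      rw [hc] at this ⊢
      norm_num at this ⊢
      linarith
    have hterm : ∀ k : ℕ, D k * π (A k) ≤ ENNReal.ofReal ((2/249) * (125/166:ℝ)^k) := by
      intro k
      have hEk : Real.exp (c*(4*(k:ℝ))) ≤ (250/249:ℝ)^k := by
        have h1 : c*(4*(k:ℝ)) = (k:ℝ)*(4*c) := by ring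
        rw [h1, Real.exp_nat_mul]
        exact pow_le_pow_left₀ (Real.exp_nonneg _) hexpc k
      have hdk : Real.exp (c*(4*((k:ℝ)+1))) - Real.exp (c*(4*(k:ℝ)))
          ≤ (1/249) * (250/249:ℝ)^k := by
        have h1 : Real.exp (c*(4*((k:ℝ)+1)))
            = Real.exp (c*(4*(k:ℝ))) * Real.exp (4*c) := by
          rw [← Real.exp_add]; congr 1; ring
        have h2 : Real.exp (c*(4*((k:ℝ)+1))) - Real.exp (c*(4*(k:ℝ)))
            = Real.exp (c*(4*(k:ℝ))) * (Real.exp (4*c) - 1) := by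
          rw [h1]; ring
        rw [h2]
        have h3 : Real.exp (4*c) - 1 ≤ 1/249 := by linarith
        have h4 : (0:ℝ) ≤ Real.exp (4*c) - 1 := by
          have := Real.one_le_exp (show (0:ℝ) ≤ 4*c by norm_num)
          linarith
        have h5 : (0:ℝ) < Real.exp (c*(4*(k:ℝ))) := Real.exp_pos _
        calc Real.exp (c*(4*(k:ℝ))) * (Real.exp (4*c) - 1)
            ≤ (250/249:ℝ)^k * (1/249) := by
              apply mul_le_mul hEk h3 h4 (by positivity)
          _ = (1/249) * (250/249:ℝ)^k := by ring
      calc D k * π (A k) ≤ D k * ENNReal.ofReal (2 * (3/4:ℝ)^k) :=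
            mul_le_mul_right (tailA k) _
        _ = ENNReal.ofReal ((Real.exp (c*(4*((k:ℝ)+1))) - Real.exp (c*(4*(k:ℝ))))
              * (2 * (3/4:ℝ)^k)) := by
            rw [hD, ← ENNReal.ofReal_mul (hDre k)]
        _ ≤ ENNReal.ofReal ((2/249) * (125/166:ℝ)^k) := by
            apply ENNReal.ofReal_le_ofReal
            have h6 : (0:ℝ) ≤ 2 * (3/4:ℝ)^k := by positivity
            calc (Real.exp (c*(4*((k:ℝ)+1))) - Real.exp (c*(4*(k:ℝ)))) * (2 * (3/4:ℝ)^k)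
                ≤ ((1/249) * (250/249:ℝ)^k) * (2 * (3/4:ℝ)^k) :=
                  mul_le_mul_of_nonneg_right hdk h6
              _ = (2/249) * ((250/249:ℝ) * (3/4))^k := by rw [mul_pow]; ring
              _ = (2/249) * (125/166:ℝ)^k := by norm_num
    calc (∑' k : ℕ, D k * π (A k))
        ≤ ∑' k : ℕ, ENNReal.ofReal ((2/249) * (125/166:ℝ)^k) :=
          ENNReal.tsum_le_tsum hterm
      _ = ENNReal.ofReal (∑' k : ℕ, (2/249) * (125/166:ℝ)^k) :=
          (ENNReal.ofReal_tsum_of_nonneg (fun k => by positivity)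
            ((summable_geometric_of_lt_one (by norm_num) (by norm_num)).mul_left _)).symm
      _ = ENNReal.ofReal (332/10209 : ℝ) := by
          rw [tsum_mul_left, tsum_geometric_of_lt_one (by norm_num) (by norm_num)]
          norm_num
  have hexp_m : (∫⁻ x, ENNReal.ofReal (Real.exp (c * |f x - m|)) ∂π)
      ≤ ENNReal.ofReal (1 + 332/10209 : ℝ) := by
    calc (∫⁻ x, ENNReal.ofReal (Real.exp (c * |f x - m|)) ∂π)
        ≤ ∫⁻ x, (1 + ∑' k : ℕ, (A k).indicator (fun _ => D k) x) ∂π :=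
          lintegral_mono layer_exp
      _ = (∫⁻ _x, (1:ENNReal) ∂π) + ∫⁻ x, ∑' k : ℕ, (A k).indicator (fun _ => D k) x ∂π :=
          lintegral_add_left measurable_const _
      _ = 1 + ∑' k : ℕ, ∫⁻ x, (A k).indicator (fun _ => D k) x ∂π := by
          rw [lintegral_const, measure_univ, mul_one,
            lintegral_tsum fun k => (measurable_const.indicator (hAmeas k)).aemeasurable]
      _ = 1 + ∑' k : ℕ, D k * π (A k) := by
          congr 1
          refine tsum_congr fun k => ?_
          rw [lintegral_indicator (hAmeas k), setLIntegral_const]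
      _ ≤ 1 + ENNReal.ofReal (332/10209 : ℝ) := add_le_add_right hsum_bound 1
      _ = ENNReal.ofReal (1 + 332/10209 : ℝ) := by
          rw [ENNReal.ofReal_add (by norm_num) (by norm_num), ENNReal.ofReal_one]
  -- final bound
  have hpt : ∀ x, Real.exp (c * |f x - Av|) ≤ Real.exp (32*c) * Real.exp (c * |f x - m|) := by
    intro x
    rw [← Real.exp_add]
    apply Real.exp_le_exp.2
    have htri : |f x - Av| ≤ |f x - m| + |m - Av| := abs_sub_le (f x) m Av
    have hcomm : |m - Av| = |Av - m| := abs_sub_comm m Av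
    have h1 : |f x - Av| ≤ |f x - m| + 32 := by
      rw [hcomm] at htri
      linarith
    nlinarith [abs_nonneg (f x - m), hc0]
  have hlin : (∫⁻ x, ENNReal.ofReal (Real.exp (c * |f x - Av|)) ∂π) ≤ ENNReal.ofReal 2 := by
    calc (∫⁻ x, ENNReal.ofReal (Real.exp (c * |f x - Av|)) ∂π)
        ≤ ∫⁻ x, ENNReal.ofReal (Real.exp (32*c) * Real.exp (c * |f x - m|)) ∂π :=
          lintegral_mono fun x => ENNReal.ofReal_le_ofReal (hpt x)
      _ = ∫⁻ x, ENNReal.ofReal (Real.exp (32*c)) * ENNReal.ofReal (Real.exp (c * |f x - m|)) ∂π := by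
          simp_rw [ENNReal.ofReal_mul (Real.exp_nonneg _)]
      _ = ENNReal.ofReal (Real.exp (32*c)) * ∫⁻ x, ENNReal.ofReal (Real.exp (c * |f x - m|)) ∂π :=
          lintegral_const_mul' _ _ ENNReal.ofReal_ne_top
      _ ≤ ENNReal.ofReal (Real.exp (32*c)) * ENNReal.ofReal (1 + 332/10209 : ℝ) :=
          mul_le_mul_right hexp_m _
      _ = ENNReal.ofReal (Real.exp (32*c) * (1 + 332/10209 : ℝ)) :=
          (ENNReal.ofReal_mul (Real.exp_nonneg _)).symm
      _ ≤ ENNReal.ofReal 2 := by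
          apply ENNReal.ofReal_le_ofReal
          have h1 : Real.exp (32*c) ≤ (1 - 32*c)⁻¹ :=
            exp_le_inv_one_sub (by rw [hc]; norm_num) (by rw [hc]; norm_num)
          have h2 : ((1:ℝ) - 32*c)⁻¹ = 125/121 := by rw [hc]; norm_num
          rw [h2] at h1
          nlinarith [Real.exp_nonneg (32*c)]
  have hmeas_exp : AEStronglyMeasurable (fun x => Real.exp (c * |f x - Av|)) π :=
    (Real.continuous_exp.comp (continuous_const.mul (hfc.sub continuous_const).abs)).aestronglyMeasurable
  rw [integral_eq_lintegral_of_nonneg_ae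
    (Filter.Eventually.of_forall fun x => (Real.exp_pos _).le) hmeas_exp]
  calc (∫⁻ x, ENNReal.ofReal (Real.exp (c * |f x - Av|)) ∂π).toReal
      ≤ (ENNReal.ofReal (2:ℝ)).toReal := ENNReal.toReal_mono ENNReal.ofReal_ne_top hlin
    _ = 2 := by rw [ENNReal.toReal_ofReal]; norm_num
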